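/- Let G be a non-abelian group of order p³ for a prime p. Then the characteristic polynomial of the adjacency matrix of the commuting graph Γ_G (over the reals) equals (X + 1)^(p³ − 2p − 1) · (X − (p² − p − 1))^(p + 1); in particular G is commuting integral. -/

import Mathlib

open Polynomial

/-- The commuting graph of a group `G`: vertices are the non-central elements,
two distinct vertices are adjacent iff they commute. -/
def commutingGraph (G : Type*) [Group G] : SimpleGraph {x : G // x ∉ Subgroup.center G} where
  Adj x y := x ≠ y ∧ (x : G) * y = (y : G) * x
  symm := ⟨by rintro x y ⟨hne, hc⟩; exact ⟨hne.symm, hc.symm⟩⟩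
  loopless := ⟨by rintro x ⟨hne, _⟩; exact hne rfl⟩

open scoped Classical in
/-- The characteristic polynomial (over `ℝ`) of the adjacency matrix of the
commuting graph of `G`. -/
noncomputable def commCharpoly (G : Type*) [Group G] [Fintype G] : Polynomial ℝ :=
  ((commutingGraph G).adjMatrix ℝ).charpoly

section Helpers
open Matrix

lemma myCharpolyDiagonal {n : Type*} [Fintype n] [DecidableEq n] (d : n → ℝ) :
    (Matrix.diagonal d).charpoly = ∏ i, (X - C (d i)) := by
  have h : Matrix.charmatrix (Matrix.diagonal d)
      = Matrix.diagonal fun i => (X : ℝ[X]) - C (d i) := by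
    ext i j
    by_cases h : i = j
    · subst h; simp [Matrix.charmatrix_apply_eq]
    · rw [Matrix.charmatrix_apply_ne _ _ _ h, Matrix.diagonal_apply_ne _ h,
        Matrix.diagonal_apply_ne _ h]
      simp
  rw [Matrix.charpoly, h, Matrix.det_diagonal]

lemma myCharpolyConj {n : Type*} [Fintype n] [DecidableEq n] (U A : Matrix n n ℝ)
    (h1 : U * star U = 1) :
    (U * A * star U).charpoly = A.charpoly := by
  classical
  have hmap : ∀ M N : Matrix n n ℝ, (M * N).map (C : ℝ → ℝ[X]) =
      M.map C * N.map C := fun M N => Matrix.map_mul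
  have hone : (1 : Matrix n n ℝ).map (C : ℝ → ℝ[X]) = 1 := Matrix.map_one _ (map_zero C) (map_one C)
  have hUV : U.map (C : ℝ → ℝ[X]) * (star U).map C = 1 := by
    rw [← hmap, h1, hone]
  have key : Matrix.charmatrix (U * A * star U)
      = U.map C * Matrix.charmatrix A * (star U).map C := by
    have : Matrix.charmatrix A = Matrix.scalar n (X : ℝ[X]) - A.map C := rfl
    rw [Matrix.charmatrix, Matrix.charmatrix]
    show Matrix.scalar n (X : ℝ[X]) - (U * A * star U).map C = _
    rw [hmap, hmap, mul_sub, sub_mul]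
    congr 1
    · symm
      rw [← (Matrix.scalar_commute (X : ℝ[X]) (fun r => Commute.all _ _) (U.map C)).eq,
        mul_assoc, hUV, mul_one]
  have hdet : (U.map (C : ℝ → ℝ[X])).det * ((star U).map C).det = 1 := by
    rw [← Matrix.det_mul, hUV, Matrix.det_one]
  rw [Matrix.charpoly, Matrix.charpoly, key, Matrix.det_mul, Matrix.det_mul]
  calc (U.map C).det * A.charmatrix.det * ((star U).map C).det
      = A.charmatrix.det * ((U.map (C : ℝ → ℝ[X])).det * ((star U).map C).det) := by ring
    _ = A.charmatrix.det := by rw [hdet, mul_one]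

lemma mySpectralCharpoly {n : Type*} [Fintype n] [DecidableEq n]
    {A : Matrix n n ℝ} (hA : A.IsHermitian) :
    A.charpoly = ∏ i, (X - C (hA.eigenvalues i)) := by
  have hofReal : (RCLike.ofReal ∘ hA.eigenvalues : n → ℝ) = hA.eigenvalues := by
    rw [RCLike.ofReal_real_eq_id, Function.id_comp]
  have h1 : (hA.eigenvectorUnitary : Matrix n n ℝ) * star (hA.eigenvectorUnitary : Matrix n n ℝ) = 1 :=
    Matrix.mem_unitaryGroup_iff.mp hA.eigenvectorUnitary.2
  conv_lhs => rw [hA.spectral_theorem, Unitary.conjStarAlgAut_apply]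
  rw [myCharpolyConj _ _ h1, hofReal, myCharpolyDiagonal]

lemma mySumEigenvalues {n : Type*} [Fintype n] [DecidableEq n]
    {A : Matrix n n ℝ} (hA : A.IsHermitian) :
    ∑ i, hA.eigenvalues i = A.trace := by
  have h2 : star (hA.eigenvectorUnitary : Matrix n n ℝ) * (hA.eigenvectorUnitary : Matrix n n ℝ) = 1 :=
    Matrix.mem_unitaryGroup_iff'.mp hA.eigenvectorUnitary.2
  have hofReal : (RCLike.ofReal ∘ hA.eigenvalues : n → ℝ) = hA.eigenvalues := by
    rw [RCLike.ofReal_real_eq_id, Function.id_comp]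
  conv_rhs => rw [hA.spectral_theorem, Unitary.conjStarAlgAut_apply]
  rw [Matrix.trace_mul_comm, ← mul_assoc, h2, one_mul, hofReal, Matrix.trace_diagonal]


open Subgroup

section GroupAux
variable (p : ℕ) (hp : p.Prime) (G : Type*) [Group G] [Fintype G]
  (hcard : Nat.card G = p ^ 3) (hna : ∃ a b : G, a * b ≠ b * a)

include hp hcard hna in
lemma myCenterCard : Nat.card (Subgroup.center G) = p := by
  haveI : Fact p.Prime := ⟨hp⟩
  obtain ⟨k, hk0, hk⟩ := IsPGroup.card_center_eq_prime_pow hcard (by norm_num)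
  -- k ≤ 3
  have hdvd : p ^ k ∣ p ^ 3 := by
    rw [← hk, ← hcard]; exact Subgroup.card_subgroup_dvd_card _
  have hk3 : k ≤ 3 := (Nat.pow_dvd_pow_iff_le_right hp.one_lt).mp hdvd
  -- suppose k ≥ 2, derive commutativity
  by_contra hne
  have hk1 : k ≠ 1 := fun h => hne (by rw [hk, h, pow_one])
  have hk2 : 2 ≤ k := by omega
  have hq : Nat.card (G ⧸ center G) * p ^ k = p ^ 3 := by
    rw [← hk, ← Subgroup.card_eq_card_quotient_mul_card_subgroup (center G), hcard]
  have hqdvd : Nat.card (G ⧸ center G) ∣ p := by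
    have h1 : Nat.card (G ⧸ center G) * p ^ k ∣ p ^ 2 * p ^ k := by
      rw [hq, ← pow_add]
      exact pow_dvd_pow p (by omega)
    have h2 : Nat.card (G ⧸ center G) ∣ p ^ 2 := by
      have hpk : 0 < p ^ k := pow_pos hp.pos k
      exact (Nat.mul_dvd_mul_iff_right hpk).mp h1
    have h3 : Nat.card (G ⧸ center G) = p ^ (3 - k) := by
      have : p ^ (3 - k) * p ^ k = p ^ 3 := by rw [← pow_add]; congr 1; omega
      have hpk : 0 < p ^ k := pow_pos hp.pos k
      exact Nat.eq_of_mul_eq_mul_right hpk (by rw [hq, this])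
    rw [h3]
    have : 3 - k ≤ 1 := by omega
    calc p ^ (3 - k) ∣ p ^ 1 := pow_dvd_pow p this
      _ = p := pow_one p
  haveI : IsCyclic (G ⧸ center G) := isCyclic_of_card_dvd_prime hqdvd
  obtain ⟨a, b, hab⟩ := hna
  exact hab (commutative_of_cyclic_center_quotient (QuotientGroup.mk' (center G))
    (by rw [QuotientGroup.ker_mk']) a b)

include hp hcard hna in
lemma myCentralizerCard (x : G) (hx : x ∉ Subgroup.center G) :
    Nat.card (Subgroup.centralizer {x}) = p ^ 2 := by
  haveI : Fact p.Prime := ⟨hp⟩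
  set C := Subgroup.centralizer ({x} : Set G) with hC
  have hxC : x ∈ C := Subgroup.mem_centralizer_singleton_iff.mpr rfl
  have hZC : center G ≤ C := Subgroup.center_le_centralizer _
  have hdvd : Nat.card C ∣ p ^ 3 := by rw [← hcard]; exact Subgroup.card_subgroup_dvd_card _
  obtain ⟨j, hj3, hj⟩ := (Nat.dvd_prime_pow hp).mp hdvd
  have hZdvd : Nat.card (center G) ∣ Nat.card C := Subgroup.card_dvd_of_le hZC
  have hZ : Nat.card (center G) = p := myCenterCard p hp G hcard hna
  -- j ≠ 3
  have hj3' : j ≠ 3 := by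
    intro h
    have : C = ⊤ := by
      apply Subgroup.eq_top_of_card_eq
      rw [hj, h, hcard]
    apply hx
    rw [Subgroup.mem_center_iff]
    intro g
    have : g ∈ C := this ▸ Subgroup.mem_top g
    exact Subgroup.mem_centralizer_singleton_iff.mp this
  -- j ≥ 2 : else card C = p = card center would force C = center ∋ x
  have hj2 : 2 ≤ j := by
    rcases Nat.lt_or_ge j 2 with h | h
    · exfalso
      interval_cases j
      · -- card C = 1, but p ∣ card C
        rw [hj, pow_zero, Nat.dvd_one, hZ] at hZdvd
        exact hp.one_lt.ne' hZdvd
      · -- card C = p: then center = C as sets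
        have hsub : (center G : Set G) ⊆ (C : Set G) := hZC
        have hcardeq : (C : Set G).ncard ≤ ((center G : Set G)).ncard := by
          rw [← Nat.card_coe_set_eq, ← Nat.card_coe_set_eq]
          simp only [SetLike.coe_sort_coe]
          rw [hj, pow_one, hZ]
        have := Set.eq_of_subset_of_ncard_le hsub hcardeq (Set.toFinite _)
        apply hx
        have hxC' : x ∈ (C : Set G) := hxC
        rw [← this] at hxC'
        exact hxC'
    · exact h
  have : j = 2 := by omega
  rw [hj, this]

include hp hcard hna in
lemma myCentralizerComm (x : G) (hx : x ∉ Subgroup.center G) :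
    ∀ a b : G, a ∈ Subgroup.centralizer {x} → b ∈ Subgroup.centralizer {x} →
      a * b = b * a := by
  haveI : Fact p.Prime := ⟨hp⟩
  intro a b ha hb
  have hcomm := IsPGroup.commutative_of_card_eq_prime_sq
    (p := p) (G := Subgroup.centralizer ({x} : Set G))
    (myCentralizerCard p hp G hcard hna x hx)
  have := hcomm ⟨a, ha⟩ ⟨b, hb⟩
  exact Subtype.ext_iff.mp this

end GroupAux

end Helpers

open Matrix in
theorem commuting_integral_of_order_p_cubed
    (p : ℕ) (hp : p.Prime) (G : Type*) [Group G] [Fintype G]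
    (hcard : Nat.card G = p ^ 3)
    (hna : ∃ a b : G, a * b ≠ b * a) :
    commCharpoly G =
        (X + 1) ^ (p ^ 3 - 2 * p - 1) *
          (X - C ((p : ℝ) ^ 2 - p - 1)) ^ (p + 1) ∧
      ∀ μ : ℝ, (commCharpoly G).IsRoot μ → ∃ k : ℤ, μ = (k : ℝ) := by
  classical
  haveI : Fact p.Prime := ⟨hp⟩
  have hp2 : 2 ≤ p := hp.two_le
  have hpcube : 2 * p + 2 ≤ p ^ 3 := by
    have h1 : 2 * 2 * p ≤ p * p * p :=
      Nat.mul_le_mul (Nat.mul_le_mul hp2 hp2) (le_refl p)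
    have h2 : p ^ 3 = p * p * p := by ring
    omega
  have hple2 : p ≤ p ^ 2 := Nat.le_self_pow (by norm_num) p
  have hple3 : p ≤ p ^ 3 := Nat.le_self_pow (by norm_num) p
  have hZ : Nat.card (Subgroup.center G) = p := myCenterCard p hp G hcard hna
  set V := {x : G // x ∉ Subgroup.center G} with hV
  set A := (commutingGraph G).adjMatrix ℝ with hAdef
  have hCCP : commCharpoly G = A.charpoly := rfl
  -- cardinality of the vertex set
  have hcardV : Fintype.card V = p ^ 3 - p := by
    have h1 : Fintype.card V = Fintype.card G - Fintype.card {x : G // x ∈ Subgroup.center G} :=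
      Fintype.card_subtype_compl _
    rw [h1, ← Nat.card_eq_fintype_card, ← Nat.card_eq_fintype_card, hcard]
    congr 1
  -- class size
  have hclass : ∀ x : V,
      (Finset.univ.filter (fun y : V => (x : G) * y = (y : G) * x)).card = p ^ 2 - p := by
    intro x
    have e : {y : V // (x : G) * y = (y : G) * x} ≃
        {g : G // g ∈ Subgroup.centralizer ({(x : G)} : Set G) ∧ g ∉ Subgroup.center G} :=
      { toFun := fun y => ⟨y.1.1,
          Subgroup.mem_centralizer_singleton_iff.mpr y.2.symm, y.1.2⟩
        invFun := fun g => ⟨⟨g.1, g.2.2⟩,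
          (Subgroup.mem_centralizer_singleton_iff.mp g.2.1).symm⟩
        left_inv := fun _ => rfl
        right_inv := fun _ => rfl }
    rw [← Fintype.card_subtype, Fintype.card_congr e, Fintype.card_subtype]
    have hfil : (Finset.univ.filter
          (fun g : G => g ∈ Subgroup.centralizer ({(x : G)} : Set G) ∧ g ∉ Subgroup.center G))
        = Finset.univ.filter (fun g : G => g ∈ Subgroup.centralizer ({(x : G)} : Set G)) \
          Finset.univ.filter (fun g : G => g ∈ Subgroup.center G) := by
      ext g
      simp only [Finset.mem_filter, Finset.mem_sdiff, Finset.mem_univ, true_and]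
    have hsub : Finset.univ.filter (fun g : G => g ∈ Subgroup.center G) ⊆
        Finset.univ.filter (fun g : G => g ∈ Subgroup.centralizer ({(x : G)} : Set G)) := by
      intro g hg
      simp only [Finset.mem_filter, Finset.mem_univ, true_and] at hg ⊢
      exact Subgroup.center_le_centralizer _ hg
    rw [hfil, Finset.card_sdiff_of_subset hsub]
    have hC : (Finset.univ.filter
        (fun g : G => g ∈ Subgroup.centralizer ({(x : G)} : Set G))).card = p ^ 2 := by
      rw [← Fintype.card_subtype, ← Nat.card_eq_fintype_card]
      exact myCentralizerCard p hp G hcard hna x x.2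
    have hZ' : (Finset.univ.filter (fun g : G => g ∈ Subgroup.center G)).card = p := by
      rw [← Fintype.card_subtype, ← Nat.card_eq_fintype_card]
      exact hZ
    rw [hC, hZ']
  -- entries of A + 1
  have hM : ∀ x y : V, (A + 1) x y = if (x : G) * y = (y : G) * x then (1 : ℝ) else 0 := by
    intro x y
    rw [hAdef, Matrix.add_apply, SimpleGraph.adjMatrix_apply]
    by_cases h : x = y
    · subst h
      simp [Matrix.one_apply, commutingGraph]
    · by_cases hc : (x : G) * y = (y : G) * x
      · simp [Matrix.one_apply, commutingGraph, h, hc]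
      · simp [Matrix.one_apply, commutingGraph, h, hc]
  set c : ℝ := ((p ^ 2 - p : ℕ) : ℝ) with hcdef
  have hcc : c = (p : ℝ) ^ 2 - p := by
    rw [hcdef, Nat.cast_sub hple2, Nat.cast_pow]
  have hcpos : (0 : ℝ) < c := by
    rw [hcc]
    have : (2 : ℝ) ≤ (p : ℝ) := by exact_mod_cast hp2
    nlinarith
  -- the key quadratic identity
  have hMM : (A + 1) * (A + 1) = c • (A + 1) := by
    ext x z
    rw [Matrix.mul_apply, Matrix.smul_apply]
    have hterm : ∀ y : V, (A + 1) x y * (A + 1) y z =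
        if ((x : G) * y = (y : G) * x ∧ (y : G) * z = (z : G) * y) then (1 : ℝ) else 0 := by
      intro y
      rw [hM, hM]
      by_cases h1 : (x : G) * y = (y : G) * x <;>
        by_cases h2 : (y : G) * z = (z : G) * y <;> simp [h1, h2]
    rw [Finset.sum_congr rfl fun y _ => hterm y, Finset.sum_boole, hM]
    by_cases hxz : (x : G) * z = (z : G) * x
    · rw [if_pos hxz, smul_eq_mul, mul_one]
      have hfil : Finset.univ.filter
          (fun y : V => (x : G) * y = (y : G) * x ∧ (y : G) * z = (z : G) * y)
          = Finset.univ.filter (fun y : V => (x : G) * y = (y : G) * x) := by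
        ext y
        simp only [Finset.mem_filter, Finset.mem_univ, true_and, and_iff_left_iff_imp]
        intro hxy
        -- y commutes with x, x commutes with z, x noncentral ⇒ y commutes with z
        exact myCentralizerComm p hp G hcard hna (x : G) x.2 (y : G) (z : G)
          (Subgroup.mem_centralizer_singleton_iff.mpr hxy.symm)
          (Subgroup.mem_centralizer_singleton_iff.mpr hxz.symm)
      rw [hfil, hclass x, hcdef]
    · rw [if_neg hxz, smul_eq_mul, mul_zero]
      have hfil : Finset.univ.filter
          (fun y : V => (x : G) * y = (y : G) * x ∧ (y : G) * z = (z : G) * y) = ∅ := by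
        ext y
        simp only [Finset.mem_filter, Finset.mem_univ, true_and, Finset.notMem_empty,
          iff_false, not_and]
        intro hxy hyz
        exact hxz (myCentralizerComm p hp G hcard hna (y : G) y.2 (x : G) (z : G)
          (Subgroup.mem_centralizer_singleton_iff.mpr hxy)
          (Subgroup.mem_centralizer_singleton_iff.mpr hyz.symm))
      rw [hfil, Finset.card_empty, Nat.cast_zero]
  -- A is hermitian
  have hA : A.IsHermitian := by
    ext i j
    rw [hAdef, Matrix.conjTranspose_apply, SimpleGraph.adjMatrix_apply,
      SimpleGraph.adjMatrix_apply, star_trivial]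
    rw [SimpleGraph.adj_comm]
  set μ := hA.eigenvalues with hμdef
  -- eigenvalue dichotomy
  have heig : ∀ i : V, μ i = -1 ∨ μ i = c - 1 := by
    intro i
    have hv := hA.mulVec_eigenvectorBasis i
    set v : V → ℝ := ⇑(hA.eigenvectorBasis i) with hvdef
    have hv1 : (A + 1) *ᵥ v = (μ i + 1) • v := by
      rw [Matrix.add_mulVec, Matrix.one_mulVec, hv, add_smul, one_smul]
    have hv2 : (A + 1) *ᵥ ((A + 1) *ᵥ v) = ((μ i + 1) * (μ i + 1)) • v := by
      rw [hv1, Matrix.mulVec_smul, hv1, smul_smul]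
    have hv3 : (A + 1) *ᵥ ((A + 1) *ᵥ v) = (c * (μ i + 1)) • v := by
      rw [Matrix.mulVec_mulVec, hMM, Matrix.smul_mulVec, hv1, smul_smul]
    have hveq : ((μ i + 1) * (μ i + 1) - c * (μ i + 1)) • v = 0 := by
      rw [sub_smul, ← hv2, ← hv3, sub_self]
    have hvne : v ≠ 0 := by
      intro h0
      apply hA.eigenvectorBasis.orthonormal.ne_zero i
      ext j
      exact congrFun h0 j
    have hscal : (μ i + 1) * (μ i + 1) - c * (μ i + 1) = 0 :=
      (smul_eq_zero.mp hveq).resolve_right hvne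
    have hfac : (μ i + 1) * (μ i + 1 - c) = 0 := by linarith [hscal]
    rcases mul_eq_zero.mp hfac with h | h
    · left; linarith
    · right; linarith
  -- trace is zero
  have htr : ∑ i, μ i = 0 := by
    rw [mySumEigenvalues hA, hAdef, SimpleGraph.trace_adjMatrix]
  -- counting eigenvalues equal to c - 1
  set S := Finset.univ.filter (fun i : V => μ i = c - 1) with hSdef
  have hcardle : S.card ≤ Fintype.card V := by
    rw [← Finset.card_univ]; exact Finset.card_filter_le _ _
  have hsplit := Finset.sum_filter_add_sum_filter_not Finset.univ
    (fun i : V => μ i = c - 1) μ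
  have hS1 : ∑ i ∈ S, μ i = (S.card : ℝ) * (c - 1) := by
    rw [Finset.sum_congr rfl (fun i hi => (Finset.mem_filter.mp hi).2),
      Finset.sum_const, nsmul_eq_mul]
  have hS2 : ∑ i ∈ Finset.univ.filter (fun i : V => ¬(μ i = c - 1)), μ i
      = -(((Fintype.card V : ℝ)) - S.card) := by
    have hall : ∀ i ∈ Finset.univ.filter (fun i : V => ¬(μ i = c - 1)), μ i = -1 := by
      intro i hi
      have := (Finset.mem_filter.mp hi).2
      exact (heig i).resolve_right this
    rw [Finset.sum_congr rfl hall, Finset.sum_const, nsmul_eq_mul]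
    have hcards := Finset.card_filter_add_card_filter_not
      (s := Finset.univ) (p := fun i : V => μ i = c - 1)
    beta_reduce at hcards
    rw [Finset.card_univ] at hcards
    have hcards' : S.card + (Finset.univ.filter (fun i : V => ¬(μ i = c - 1))).card
        = Fintype.card V := hcards
    have : ((Finset.univ.filter (fun i : V => ¬(μ i = c - 1))).card : ℝ)
        = (Fintype.card V : ℝ) - S.card := by
      rw [hSdef]
      have : (Finset.univ.filter (fun i : V => ¬(μ i = c - 1))).card
          = Fintype.card V - S.card := by omega
      rw [this, Nat.cast_sub hcardle]
    rw [this]; ring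
  have hkey : (S.card : ℝ) * c = (Fintype.card V : ℝ) := by
    have h0 : (S.card : ℝ) * (c - 1) + (-(((Fintype.card V : ℝ)) - S.card)) = 0 := by
      rw [← hS1, ← hS2, hsplit, htr]
    linarith
  have hk : S.card = p + 1 := by
    have hrc : (S.card : ℝ) * ((p : ℝ) ^ 2 - p) = (p : ℝ) ^ 3 - p := by
      rw [← hcc, hkey, hcardV, Nat.cast_sub hple3, Nat.cast_pow]
    have hne : (p : ℝ) ^ 2 - p ≠ 0 := by rw [← hcc]; exact ne_of_gt hcpos
    have : (S.card : ℝ) = (p : ℝ) + 1 := by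
      apply mul_right_cancel₀ hne
      rw [hrc]; ring
    exact_mod_cast this
  have hkcompl : (Finset.univ.filter (fun i : V => ¬(μ i = c - 1))).card
      = p ^ 3 - 2 * p - 1 := by
    have hcards := Finset.card_filter_add_card_filter_not
      (s := Finset.univ) (p := fun i : V => μ i = c - 1)
    beta_reduce at hcards
    rw [Finset.card_univ] at hcards
    have hcards' : S.card + (Finset.univ.filter (fun i : V => ¬(μ i = c - 1))).card
        = Fintype.card V := hcards
    rw [hSdef] at hk
    rw [hcardV] at hcards
    have hple : p + 1 ≤ p ^ 3 - p := by omega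
    omega
  -- the characteristic polynomial
  have hcp : A.charpoly =
      (X + 1) ^ (p ^ 3 - 2 * p - 1) * (X - C ((p : ℝ) ^ 2 - p - 1)) ^ (p + 1) := by
    rw [mySpectralCharpoly hA]
    rw [← Finset.prod_filter_mul_prod_filter_not Finset.univ (fun i : V => μ i = c - 1)
      (fun i => X - C (μ i))]
    have h1 : ∏ i ∈ S, (X - C (μ i)) = (X - C ((p : ℝ) ^ 2 - p - 1)) ^ (p + 1) := by
      rw [Finset.prod_congr rfl (fun i hi => ?_), Finset.prod_const, hk]
      rw [(Finset.mem_filter.mp hi).2, hcc]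
    have h2 : ∏ i ∈ Finset.univ.filter (fun i : V => ¬(μ i = c - 1)), (X - C (μ i))
        = (X + 1) ^ (p ^ 3 - 2 * p - 1) := by
      rw [Finset.prod_congr rfl (fun i hi => ?_), Finset.prod_const, hkcompl]
      rw [(heig i).resolve_right (Finset.mem_filter.mp hi).2]
      simp
    rw [h1, h2, mul_comm]
  refine ⟨by rw [hCCP, hcp], ?_⟩
  intro μ0 hroot
  rw [hCCP, hcp] at hroot
  rw [Polynomial.IsRoot, Polynomial.eval_mul, mul_eq_zero, Polynomial.eval_pow,
    Polynomial.eval_pow] at hroot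
  have ha0 : p ^ 3 - 2 * p - 1 ≠ 0 := by omega
  rcases hroot with h | h
  · have : eval μ0 (X + 1) = 0 := pow_eq_zero_iff ha0 |>.mp h
    rw [Polynomial.eval_add, Polynomial.eval_X, Polynomial.eval_one] at this
    exact ⟨-1, by push_cast; linarith⟩
  · have : eval μ0 (X - C ((p : ℝ) ^ 2 - p - 1)) = 0 :=
      pow_eq_zero_iff (Nat.succ_ne_zero p) |>.mp h
    rw [Polynomial.eval_sub, Polynomial.eval_X, Polynomial.eval_C] at this
    exact ⟨(p : ℤ) ^ 2 - p - 1, by push_cast; linarith⟩
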